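/- Let R be a ring, F a class of left R-modules defining a homological dimension, closed under finite direct sums, with the class of homomorphic images of F closed under extensions. For a short exact sequence 0 → A → B → C → 0: if B has F-dimension ≤ i and C has F-dimension ≤ i + 1, then A has F-dimension ≤ i. -/

import Mathlib

open CategoryTheory

universe u

noncomputable section

variable {R : Type u} [Ring R]

/-- Membership in `F ∪ {0}`. -/
def MemF0 (F : ModuleCat.{u} R → Prop) (M : ModuleCat.{u} R) : Prop :=
  F M ∨ Subsingleton M

/-- There is a short exact sequence `0 → A → B → C → 0`. -/
def IsSES {R : Type u} [Ring R] (A B C : ModuleCat.{u} R) : Prop :=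
  ∃ (f : A ⟶ B) (g : B ⟶ C),
    Function.Injective f ∧ Function.Surjective g ∧ Function.Exact f g

/-- `FDimLE F n M` : `M` has left `F`-dimension `≤ n`, i.e. there is an exact sequence
`0 → F_n → ⋯ → F_0 → M → 0` with all `F_j ∈ F ∪ {0}`. -/
def FDimLE (F : ModuleCat.{u} R → Prop) : ℕ → ModuleCat.{u} R → Prop
  | 0, M => MemF0 F M
  | n + 1, M => ∃ K F0 : ModuleCat.{u} R, MemF0 F F0 ∧ IsSES K F0 M ∧ FDimLE F n K

/-- `M` admits a (possibly infinite) `F`-resolution `⋯ → F_1 → F_0 → M → 0`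
with all terms in `F ∪ {0}`. -/
def HasFRes (F : ModuleCat.{u} R → Prop) (M : ModuleCat.{u} R) : Prop :=
  ∃ K Fo : ℕ → ModuleCat.{u} R, K 0 = M ∧
    ∀ n, MemF0 F (Fo n) ∧ IsSES (K (n + 1)) (Fo n) (K n)

/-- `IsFKernel F n K X` : there is an exact sequence
`0 → K → F_n → ⋯ → F_0 → X → 0` with all `F_i ∈ F`. -/
def IsFKernel (F : ModuleCat.{u} R → Prop) : ℕ → ModuleCat.{u} R → ModuleCat.{u} R → Prop
  | 0, K, X => ∃ F0, F F0 ∧ IsSES K F0 X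
  | n + 1, K, X => ∃ K1 F0, F F0 ∧ IsSES K1 F0 X ∧ IsFKernel F n K K1

/-- The class `F` defines a homological dimension. -/
def DefinesHomDim (F : ModuleCat.{u} R → Prop) : Prop :=
  (∀ K Fm M : ModuleCat.{u} R, F Fm → IsSES K Fm M → HasFRes F M → HasFRes F K) ∧
  (∀ (n : ℕ) (K X : ModuleCat.{u} R), FDimLE F (n + 1) X → IsFKernel F n K X → F K)

/-- `M` is a homomorphic image of a module in `F`. -/
def IsImageOfF (F : ModuleCat.{u} R → Prop) (M : ModuleCat.{u} R) : Prop :=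
  ∃ F0 : ModuleCat.{u} R, F F0 ∧ ∃ g : F0 ⟶ M, Function.Surjective g

/-- `F` is closed under finite (binary) direct sums. -/
def ClosedUnderFinSums (F : ModuleCat.{u} R → Prop) : Prop :=
  ∀ A B : ModuleCat.{u} R, F A → F B → F (ModuleCat.of R (A × B))

/-- The class of homomorphic images of modules in `F` is closed under extensions. -/
def ImagesClosedUnderExt (F : ModuleCat.{u} R → Prop) : Prop :=
  ∀ (A B C : ModuleCat.{u} R) (f : A ⟶ B) (g : B ⟶ C),
    Function.Injective f → Function.Surjective g → Function.Exact f g →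
      IsImageOfF F A → IsImageOfF F C → IsImageOfF F B

/-- `Ext^i(M, N)` vanishes. -/
def ExtZero {R : Type u} [Ring R] (i : ℕ) (M N : ModuleCat.{u} R) : Prop :=
  Subsingleton (((Ext ℤ (ModuleCat.{u} R) i).obj (Opposite.op M)).obj N)

end

section Stmt7Aux

open CategoryTheory

variable {R : Type u} [Ring R] {F : ModuleCat.{u} R → Prop}

private def Zmod (R : Type u) [Ring R] : ModuleCat.{u} R := ModuleCat.of R PUnit.{u+1}

private lemma zmod_ss : Subsingleton ((Zmod R : ModuleCat.{u} R) : Type u) := ⟨fun _ _ => rfl⟩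

private lemma memF0_zmod : MemF0 F (Zmod R) := Or.inr zmod_ss

private lemma ss_of_surj {M N : ModuleCat.{u} R} (q : M ⟶ N) (hq : Function.Surjective q)
    (h : Subsingleton M) : Subsingleton N :=
  ⟨fun a b => by
    obtain ⟨x, rfl⟩ := hq a
    obtain ⟨y, rfl⟩ := hq b
    rw [h.elim x y]⟩

private lemma ss_of_inj {M N : ModuleCat.{u} R} (q : M ⟶ N) (hq : Function.Injective q)
    (h : Subsingleton N) : Subsingleton M :=
  ⟨fun a b => hq (h.elim _ _)⟩

private lemma fdim_zero {M : ModuleCat.{u} R} : FDimLE F 0 M ↔ MemF0 F M := Iff.rfl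

private lemma fdim_succ {n : ℕ} {M : ModuleCat.{u} R} :
    FDimLE F (n + 1) M ↔
      ∃ K F0 : ModuleCat.{u} R, MemF0 F F0 ∧ IsSES K F0 M ∧ FDimLE F n K := Iff.rfl

private lemma ses_zero_id (M : ModuleCat.{u} R) : IsSES (Zmod R) M M := by
  refine ⟨0, 𝟙 M, fun a b _ => (zmod_ss (R := R)).elim a b, fun y => ⟨y, rfl⟩, fun y => ?_⟩
  constructor
  · intro hy
    have hy' : y = 0 := hy
    exact ⟨0, by simp [hy']⟩
  · rintro ⟨x, rfl⟩
    rfl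

private lemma ses_zero_zero : IsSES (Zmod R) (Zmod R) (Zmod R) := by
  haveI := zmod_ss (R := R)
  refine ⟨0, 0, fun a b _ => Subsingleton.elim a b, fun y => ⟨0, Subsingleton.elim _ _⟩,
    fun y => ⟨fun _ => ⟨0, Subsingleton.elim _ _⟩, fun _ => Subsingleton.elim _ _⟩⟩

private lemma fdim_mono : ∀ {n : ℕ} {M : ModuleCat.{u} R}, FDimLE F n M → FDimLE F (n + 1) M
  | 0, M, h => fdim_succ.mpr ⟨Zmod R, M, h, ses_zero_id M, memF0_zmod⟩
  | n + 1, M, h => by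
    obtain ⟨K, F0, h0, hs, hK⟩ := fdim_succ.mp h
    exact fdim_succ.mpr ⟨K, F0, h0, hs, fdim_mono hK⟩

private lemma fdim_le {m n : ℕ} (h : m ≤ n) {M : ModuleCat.{u} R} :
    FDimLE F m M → FDimLE F n M := by
  induction h with
  | refl => exact id
  | step _ ih => exact fun hm => fdim_mono (ih hm)

private lemma ssDim (n : ℕ) (M : ModuleCat.{u} R) (h : Subsingleton M) : FDimLE F n M :=
  fdim_le (Nat.zero_le n) (fdim_zero.mpr (Or.inr h))

private lemma isoDim {n : ℕ} {X Y : ModuleCat.{u} R} (e : (X : Type u) ≃ₗ[R] (Y : Type u))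
    (h : FDimLE F (n + 1) X) : FDimLE F (n + 1) Y := by
  obtain ⟨K, F0, h0, ⟨a, b, hai, hbs, hab⟩, hK⟩ := fdim_succ.mp h
  refine fdim_succ.mpr ⟨K, F0, h0, ⟨a, b ≫ ModuleCat.ofHom e.toLinearMap, hai, ?_, ?_⟩, hK⟩
  · intro y
    obtain ⟨x, hx⟩ := hbs (e.symm y)
    refine ⟨x, ?_⟩
    show e.toLinearMap (b x) = y
    rw [hx]
    exact e.apply_symm_apply y
  · intro y
    constructor
    · intro hy
      have h1 : e (b y) = 0 := hy
      have hb0 : b y = 0 := by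
        apply e.injective; simpa using h1
      exact (hab y).mp hb0
    · intro hy
      have hb0 : b y = 0 := (hab y).mpr hy
      show e.toLinearMap (b y) = 0
      rw [hb0, map_zero]

private lemma isFKernel_zero {F0 K X : ModuleCat.{u} R} (h : F F0) (hs : IsSES K F0 X) :
    IsFKernel F 0 K X := by
  show ∃ F0, F F0 ∧ IsSES K F0 X
  exact ⟨F0, h, hs⟩

private lemma isFKernel_succ {n : ℕ} {K X K1 F0 : ModuleCat.{u} R} (h : F F0)
    (hs : IsSES K1 F0 X) (hk : IsFKernel F n K K1) : IsFKernel F (n + 1) K X := by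
  show ∃ K1 F0, F F0 ∧ IsSES K1 F0 X ∧ IsFKernel F n K K1
  exact ⟨K1, F0, h, hs, hk⟩

private lemma chainDim : ∀ (n : ℕ) (Ks Fo : ℕ → ModuleCat.{u} R),
    (∀ j, MemF0 F (Fo j) ∧ IsSES (Ks (j + 1)) (Fo j) (Ks j)) → MemF0 F (Ks n) →
    FDimLE F n (Ks 0)
  | 0, _, _, _, hend => fdim_zero.mpr hend
  | n + 1, Ks, Fo, hch, hend =>
    fdim_succ.mpr ⟨Ks 1, Fo 0, (hch 0).1, (hch 0).2,
      chainDim n (fun j => Ks (j + 1)) (fun j => Fo (j + 1)) (fun j => hch (j + 1)) hend⟩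

private lemma kernChain : ∀ (m : ℕ) (Ks Fo : ℕ → ModuleCat.{u} R),
    (∀ j, IsSES (Ks (j + 1)) (Fo j) (Ks j)) → (∀ j, j ≤ m → F (Fo j)) →
    IsFKernel F m (Ks (m + 1)) (Ks 0)
  | 0, Ks, _, hch, hF' => isFKernel_zero (hF' 0 le_rfl) (hch 0)
  | m + 1, Ks, Fo, hch, hF' =>
    isFKernel_succ (hF' 0 (Nat.zero_le _)) (hch 0)
      (kernChain m (fun j => Ks (j + 1)) (fun j => Fo (j + 1)) (fun j => hch (j + 1))
        (fun j hj => hF' (j + 1) (by omega)))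

private lemma resOfDim : ∀ (n : ℕ) (M : ModuleCat.{u} R), FDimLE F n M → HasFRes F M
  | 0, M, h =>
    ⟨(fun j => match j with | 0 => M | _ + 1 => Zmod R),
     (fun j => match j with | 0 => M | _ + 1 => Zmod R), rfl, by
      intro j
      cases j with
      | zero => exact ⟨fdim_zero.mp h, ses_zero_id M⟩
      | succ j => exact ⟨memF0_zmod, ses_zero_zero⟩⟩
  | n + 1, M, h => by
    obtain ⟨K0, F0, h0, hs, hK⟩ := fdim_succ.mp h
    obtain ⟨Ks, Fo, hKs0, hch⟩ := resOfDim n K0 hK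
    refine ⟨(fun j => match j with | 0 => M | j + 1 => Ks j),
            (fun j => match j with | 0 => F0 | j + 1 => Fo j), rfl, ?_⟩
    intro j
    cases j with
    | zero =>
      refine ⟨h0, ?_⟩
      show IsSES (Ks 0) F0 M
      rw [hKs0]; exact hs
    | succ j => exact hch j

private lemma lemA (hF : DefinesHomDim F) {n : ℕ} {K F0 M : ModuleCat.{u} R}
    (hF0 : F F0) (hs : IsSES K F0 M) (hM : FDimLE F (n + 1) M) : FDimLE F n K := by
  obtain ⟨Ks, Fo, hKs0, hch⟩ := hF.1 K F0 M hF0 hs (resOfDim _ _ hM)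
  subst hKs0
  by_cases hall : ∀ j, j < n → F (Fo j)
  · have hkn : F (Ks n) := by
      cases n with
      | zero => exact hF.2 0 (Ks 0) M hM (isFKernel_zero hF0 hs)
      | succ m =>
        exact hF.2 (m + 1) (Ks (m + 1)) M hM
          (isFKernel_succ hF0 hs
            (kernChain m Ks Fo (fun j => (hch j).2) (fun j hj => hall j (by omega))))
    exact chainDim n Ks Fo hch (Or.inl hkn)
  · push_neg at hall
    obtain ⟨j, hjn, hjF⟩ := hall
    have hss : Subsingleton (Fo j) := ((hch j).1).resolve_left hjF
    have hssK : Subsingleton (Ks (j + 1)) := by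
      obtain ⟨a, b, hai, _, _⟩ := (hch j).2
      exact ss_of_inj a hai hss
    exact fdim_le (by omega : j + 1 ≤ n) (chainDim (j + 1) Ks Fo hch (Or.inr hssK))

private lemma ssProdDimLeft {n : ℕ} {X Y : ModuleCat.{u} R} (hss : Subsingleton X)
    (h : FDimLE F (n + 1) Y) : FDimLE F (n + 1) (ModuleCat.of R (X × Y)) := by
  refine isoDim (X := Y) (Y := ModuleCat.of R (X × Y)) ?_ h
  exact
    { toFun := fun y => ((0 : X), y)
      map_add' := fun a b => Prod.ext (hss.elim _ _) rfl
      map_smul' := fun r a => Prod.ext (hss.elim _ _) rfl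
      invFun := Prod.snd
      left_inv := fun y => rfl
      right_inv := fun p => Prod.ext (hss.elim _ _) rfl }

private lemma ssProdDimRight {n : ℕ} {X Y : ModuleCat.{u} R} (hss : Subsingleton Y)
    (h : FDimLE F (n + 1) X) : FDimLE F (n + 1) (ModuleCat.of R (X × Y)) := by
  refine isoDim (X := X) (Y := ModuleCat.of R (X × Y)) ?_ h
  exact
    { toFun := fun x => (x, (0 : Y))
      map_add' := fun a b => Prod.ext rfl (hss.elim _ _)
      map_smul' := fun r a => Prod.ext rfl (hss.elim _ _)
      invFun := Prod.fst
      left_inv := fun y => rfl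
      right_inv := fun p => Prod.ext rfl (hss.elim _ _) }

private lemma prodCover {KX FX X KY FY Y : ModuleCat.{u} R}
    (kx : KX ⟶ FX) (px : FX ⟶ X) (ky : KY ⟶ FY) (py : FY ⟶ Y)
    (hkxi : Function.Injective kx) (hpxs : Function.Surjective px)
    (hkpx : Function.Exact kx px)
    (hkyi : Function.Injective ky) (hpys : Function.Surjective py)
    (hkpy : Function.Exact ky py) :
    IsSES (ModuleCat.of R (KX × KY)) (ModuleCat.of R (FX × FY)) (ModuleCat.of R (X × Y)) := by
  refine ⟨ModuleCat.ofHom (LinearMap.prodMap (kx.hom : KX →ₗ[R] FX) (ky.hom : KY →ₗ[R] FY)),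
          ModuleCat.ofHom (LinearMap.prodMap (px.hom : FX →ₗ[R] X) (py.hom : FY →ₗ[R] Y)),
          ?_, ?_, ?_⟩
  · intro a b hab
    have h1 : kx a.1 = kx b.1 := congrArg Prod.fst hab
    have h2 : ky a.2 = ky b.2 := congrArg Prod.snd hab
    exact Prod.ext (hkxi h1) (hkyi h2)
  · intro z
    obtain ⟨x1, hx1⟩ := hpxs z.1
    obtain ⟨x2, hx2⟩ := hpys z.2
    exact ⟨(x1, x2), Prod.ext hx1 hx2⟩
  · intro z
    constructor
    · intro hz
      have h1 : px z.1 = 0 := congrArg Prod.fst hz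
      have h2 : py z.2 = 0 := congrArg Prod.snd hz
      obtain ⟨x1, hx1⟩ := (hkpx z.1).mp h1
      obtain ⟨x2, hx2⟩ := (hkpy z.2).mp h2
      exact ⟨(x1, x2), Prod.ext hx1 hx2⟩
    · rintro ⟨⟨x1, x2⟩, rfl⟩
      exact Prod.ext (hkpx.apply_apply_eq_zero x1) (hkpy.apply_apply_eq_zero x2)

private lemma prodCoverLeft {KX FX X KY FY Y : ModuleCat.{u} R}
    (kx : KX ⟶ FX) (px : FX ⟶ X) (ky : KY ⟶ FY) (py : FY ⟶ Y)
    (hkxi : Function.Injective kx) (hpxs : Function.Surjective px)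
    (hkpx : Function.Exact kx px)
    (hpys : Function.Surjective py)
    (hkpy : Function.Exact ky py) (hssKY : Subsingleton KY) :
    IsSES KX (ModuleCat.of R (FX × FY)) (ModuleCat.of R (X × Y)) := by
  refine ⟨ModuleCat.ofHom (LinearMap.prod (kx.hom : KX →ₗ[R] FX) (0 : KX →ₗ[R] FY)),
          ModuleCat.ofHom (LinearMap.prodMap (px.hom : FX →ₗ[R] X) (py.hom : FY →ₗ[R] Y)),
          ?_, ?_, ?_⟩
  · intro a b hab
    exact hkxi (congrArg Prod.fst hab)
  · intro z
    obtain ⟨x1, hx1⟩ := hpxs z.1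
    obtain ⟨x2, hx2⟩ := hpys z.2
    exact ⟨(x1, x2), Prod.ext hx1 hx2⟩
  · intro z
    constructor
    · intro hz
      have h1 : px z.1 = 0 := congrArg Prod.fst hz
      have h2 : py z.2 = 0 := congrArg Prod.snd hz
      obtain ⟨x1, hx1⟩ := (hkpx z.1).mp h1
      obtain ⟨x2, hx2⟩ := (hkpy z.2).mp h2
      refine ⟨x1, Prod.ext hx1 ?_⟩
      show (0 : FY) = z.2
      rw [← hx2, hssKY.elim x2 0, map_zero]
    · rintro ⟨x, rfl⟩
      refine Prod.ext (hkpx.apply_apply_eq_zero x) ?_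
      show py 0 = 0
      rw [map_zero]

private lemma prodCoverRight {KX FX X KY FY Y : ModuleCat.{u} R}
    (kx : KX ⟶ FX) (px : FX ⟶ X) (ky : KY ⟶ FY) (py : FY ⟶ Y)
    (hpxs : Function.Surjective px)
    (hkpx : Function.Exact kx px)
    (hkyi : Function.Injective ky) (hpys : Function.Surjective py)
    (hkpy : Function.Exact ky py) (hssKX : Subsingleton KX) :
    IsSES KY (ModuleCat.of R (FX × FY)) (ModuleCat.of R (X × Y)) := by
  refine ⟨ModuleCat.ofHom (LinearMap.prod (0 : KY →ₗ[R] FX) (ky.hom : KY →ₗ[R] FY)),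
          ModuleCat.ofHom (LinearMap.prodMap (px.hom : FX →ₗ[R] X) (py.hom : FY →ₗ[R] Y)),
          ?_, ?_, ?_⟩
  · intro a b hab
    exact hkyi (congrArg Prod.snd hab)
  · intro z
    obtain ⟨x1, hx1⟩ := hpxs z.1
    obtain ⟨x2, hx2⟩ := hpys z.2
    exact ⟨(x1, x2), Prod.ext hx1 hx2⟩
  · intro z
    constructor
    · intro hz
      have h1 : px z.1 = 0 := congrArg Prod.fst hz
      have h2 : py z.2 = 0 := congrArg Prod.snd hz
      obtain ⟨x1, hx1⟩ := (hkpx z.1).mp h1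
      obtain ⟨x2, hx2⟩ := (hkpy z.2).mp h2
      refine ⟨x2, Prod.ext ?_ hx2⟩
      show (0 : FX) = z.1
      rw [← hx1, hssKX.elim x1 0, map_zero]
    · rintro ⟨x, rfl⟩
      refine Prod.ext ?_ (hkpy.apply_apply_eq_zero x)
      show px 0 = 0
      rw [map_zero]

private lemma prodDim (hsum : ClosedUnderFinSums F) :
    ∀ (n : ℕ) (X Y : ModuleCat.{u} R), FDimLE F (n + 1) X → FDimLE F (n + 1) Y →
      FDimLE F (n + 1) (ModuleCat.of R (X × Y)) := by
  intro n
  induction n with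
  | zero =>
    intro X Y hX hY
    obtain ⟨KX, FX, hFX0, ⟨kx, px, hkxi, hpxs, hkpx⟩, hKX⟩ := fdim_succ.mp hX
    obtain ⟨KY, FY, hFY0, ⟨ky, py, hkyi, hpys, hkpy⟩, hKY⟩ := fdim_succ.mp hY
    rcases hFX0 with hFX | hssFX
    swap
    · exact ssProdDimLeft (ss_of_surj px hpxs hssFX) hY
    rcases hFY0 with hFY | hssFY
    swap
    · exact ssProdDimRight (ss_of_surj py hpys hssFY) hX
    have hFXY : MemF0 F (ModuleCat.of R (FX × FY)) := Or.inl (hsum FX FY hFX hFY)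
    rcases fdim_zero.mp hKY with hKYF | hssKY
    swap
    · exact fdim_succ.mpr ⟨KX, ModuleCat.of R (FX × FY), hFXY,
        prodCoverLeft kx px ky py hkxi hpxs hkpx hpys hkpy hssKY, hKX⟩
    rcases fdim_zero.mp hKX with hKXF | hssKX
    swap
    · exact fdim_succ.mpr ⟨KY, ModuleCat.of R (FX × FY), hFXY,
        prodCoverRight kx px ky py hpxs hkpx hkyi hpys hkpy hssKX, hKY⟩
    exact fdim_succ.mpr ⟨ModuleCat.of R (KX × KY), ModuleCat.of R (FX × FY), hFXY,
      prodCover kx px ky py hkxi hpxs hkpx hkyi hpys hkpy,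
      fdim_zero.mpr (Or.inl (hsum KX KY hKXF hKYF))⟩
  | succ n IH =>
    intro X Y hX hY
    obtain ⟨KX, FX, hFX0, ⟨kx, px, hkxi, hpxs, hkpx⟩, hKX⟩ := fdim_succ.mp hX
    obtain ⟨KY, FY, hFY0, ⟨ky, py, hkyi, hpys, hkpy⟩, hKY⟩ := fdim_succ.mp hY
    rcases hFX0 with hFX | hssFX
    swap
    · exact ssProdDimLeft (ss_of_surj px hpxs hssFX) hY
    rcases hFY0 with hFY | hssFY
    swap
    · exact ssProdDimRight (ss_of_surj py hpys hssFY) hX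
    exact fdim_succ.mpr ⟨ModuleCat.of R (KX × KY), ModuleCat.of R (FX × FY),
      Or.inl (hsum FX FY hFX hFY),
      prodCover kx px ky py hkxi hpxs hkpx hkyi hpys hkpy,
      IH KX KY hKX hKY⟩

end Stmt7Aux

theorem stmt7 {R : Type u} [Ring R] (F : ModuleCat.{u} R → Prop)
    (hF : DefinesHomDim F) (hsum : ClosedUnderFinSums F)
    (himg : ImagesClosedUnderExt F)
    (A B C : ModuleCat.{u} R) (f : A ⟶ B) (g : B ⟶ C)
    (hinj : Function.Injective f) (hsurj : Function.Surjective g)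
    (hex : Function.Exact f g) (i : ℕ)
    (hB : FDimLE F i B) (hC : FDimLE F (i + 1) C) :
    FDimLE F i A := by
  induction i generalizing A B C f g with
  | zero =>
    rcases fdim_zero.mp hB with hFB | hssB
    · exact fdim_zero.mpr (Or.inl (hF.2 0 A C hC (isFKernel_zero hFB ⟨f, g, hinj, hsurj, hex⟩)))
    · exact fdim_zero.mpr (Or.inr (ss_of_inj f hinj hssB))
  | succ i IH =>
    obtain ⟨KB, FB, hFB0, ⟨k, π, hki, hπs, hkπ⟩, hKB⟩ := fdim_succ.mp hB
    rcases hFB0 with hFB | hssFB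
    swap
    · exact ssDim _ _ (ss_of_inj f hinj (ss_of_surj π hπs hssFB))
    -- ρ : FB → C, L := ker ρ
    set ρ : FB ⟶ C := π ≫ g with hρ
    have hρap : ∀ x : FB, ρ x = g (π x) := fun x => rfl
    have hρs : Function.Surjective ρ := by
      intro c
      obtain ⟨b, rfl⟩ := hsurj c
      obtain ⟨x, rfl⟩ := hπs b
      exact ⟨x, rfl⟩
    set Lsub : Submodule R FB := LinearMap.ker (ρ.hom : FB →ₗ[R] C) with hLsub
    set Lm : ModuleCat.{u} R := ModuleCat.of R ↥Lsub with hLm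
    set ι : Lm ⟶ FB := ModuleCat.ofHom Lsub.subtype with hι
    have hsesL : IsSES Lm FB C :=
      ⟨ι, ρ, Subtype.val_injective, hρs,
        fun y => ⟨fun h => ⟨⟨y, h⟩, rfl⟩, by rintro ⟨⟨x, hx⟩, rfl⟩; exact hx⟩⟩
    have hLdim : FDimLE F (i + 1) Lm := lemA hF hFB hsesL hC
    -- the map t : Lm → A with f (t x) = π (ι x)
    have hmemt : ∀ x : ↥Lsub, π (Lsub.subtype x) ∈ LinearMap.range (f.hom : A →ₗ[R] B) := by
      intro x
      have hx0 : g (π (x : FB)) = 0 := x.2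
      obtain ⟨a, ha⟩ := (hex _).mp hx0
      exact ⟨a, ha⟩
    set eA := LinearEquiv.ofInjective (f.hom : A →ₗ[R] B) hinj with heA
    set t : Lm ⟶ A := ModuleCat.ofHom (eA.symm.toLinearMap ∘ₗ
      LinearMap.codRestrict (LinearMap.range (f.hom : A →ₗ[R] B))
        ((π.hom : FB →ₗ[R] B) ∘ₗ Lsub.subtype) hmemt) with ht
    have hkey : ∀ z : ↥(LinearMap.range (f.hom : A →ₗ[R] B)), f (eA.symm z) = (z : B) := by
      intro z
      have h1 := congrArg Subtype.val (eA.apply_symm_apply z)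
      rw [heA, LinearEquiv.ofInjective_apply] at h1
      exact h1
    have hft : ∀ x : Lm, f (t x) = π (ι x) := by
      intro x
      have h2 : t x = eA.symm ⟨π (ι x), hmemt x⟩ := rfl
      rw [h2]
      exact hkey ⟨π (ι x), hmemt x⟩
    have hts : Function.Surjective t := by
      intro a
      obtain ⟨x, hx⟩ := hπs (f a)
      have hxL : x ∈ Lsub := by
        show g (π x) = 0
        rw [hx]
        exact hex.apply_apply_eq_zero a
      refine ⟨⟨x, hxL⟩, hinj ?_⟩
      rw [hft ⟨x, hxL⟩]
      exact hx
    -- k' : KB → Lm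
    have hmemk : ∀ y : KB, k y ∈ Lsub := by
      intro y
      show g (π (k y)) = 0
      rw [hkπ.apply_apply_eq_zero y, map_zero]
    set k' : KB ⟶ Lm := ModuleCat.ofHom
      (LinearMap.codRestrict Lsub (k.hom : KB →ₗ[R] FB) hmemk) with hk'
    have hk'i : Function.Injective k' := fun a b h => hki (congrArg Subtype.val h)
    have hexk't : Function.Exact k' t := by
      intro y
      constructor
      · intro hy
        have hπy : π (ι y) = 0 := by rw [← hft y, hy, map_zero]
        obtain ⟨x, hx⟩ := (hkπ _).mp hπy
        exact ⟨x, Subtype.val_injective hx⟩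
      · rintro ⟨x, rfl⟩
        apply hinj
        rw [hft (k' x), map_zero]
        exact hkπ.apply_apply_eq_zero x
    -- cover of Lm
    obtain ⟨KL, FL, hFL0, ⟨m, lam, hmi, hlams, hmlam⟩, hKL⟩ := fdim_succ.mp hLdim
    rcases hFL0 with hFL | hssFL
    swap
    · exact ssDim _ _ (ss_of_surj t hts (ss_of_surj lam hlams hssFL))
    set τ : FL ⟶ A := lam ≫ t with hτ
    have hτap : ∀ x : FL, τ x = t (lam x) := fun x => rfl
    have hτs : Function.Surjective τ := by
      intro a
      obtain ⟨x, hx⟩ := hts a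
      obtain ⟨y, hy⟩ := hlams x
      exact ⟨y, by rw [hτap, hy, hx]⟩
    by_cases hssKB : Subsingleton KB
    · -- degenerate case : KB = 0, so t is injective and (m, τ) is exact
      refine fdim_succ.mpr ⟨KL, FL, Or.inl hFL, ⟨m, τ, hmi, hτs, ?_⟩, hKL⟩
      intro y
      constructor
      · intro hy
        have h1 : t (lam y) = 0 := hy
        obtain ⟨x, hx⟩ := (hexk't _).mp h1
        have h2 : lam y = 0 := by rw [← hx, hssKB.elim x 0, map_zero]
        exact (hmlam y).mp h2
      · rintro ⟨x, rfl⟩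
        show t (lam (m x)) = 0
        rw [hmlam.apply_apply_eq_zero x, map_zero]
    -- main case
    set Ksub : Submodule R FL := LinearMap.ker (τ.hom : FL →ₗ[R] A) with hKsub
    set Kt : ModuleCat.{u} R := ModuleCat.of R ↥Ksub with hKt
    set H : ModuleCat.{u} R := ModuleCat.of R (KB × FL) with hH
    set h' : H ⟶ Lm := ModuleCat.ofHom
      ((k'.hom : KB →ₗ[R] Lm).coprod (lam.hom : FL →ₗ[R] Lm)) with hh'
    have hh'ap : ∀ z : KB × FL, h' z = k' z.1 + lam z.2 := fun z => rfl
    have hh's : Function.Surjective h' := by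
      intro z
      obtain ⟨x, hx⟩ := hlams z
      refine ⟨(0, x), ?_⟩
      rw [hh'ap, map_zero, zero_add]
      exact hx
    have hmem2 : ∀ q : ↥Ksub, lam (Ksub.subtype q) ∈ LinearMap.range (k'.hom : KB →ₗ[R] Lm) := by
      intro q
      have hq : t (lam (Ksub.subtype q)) = 0 := q.2
      obtain ⟨x, hx⟩ := (hexk't _).mp hq
      exact ⟨x, hx⟩
    set eK := LinearEquiv.ofInjective (k'.hom : KB →ₗ[R] Lm) hk'i with heK
    set σ : ↥Ksub →ₗ[R] KB := eK.symm.toLinearMap ∘ₗ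
      LinearMap.codRestrict (LinearMap.range (k'.hom : KB →ₗ[R] Lm))
        ((lam.hom : FL →ₗ[R] Lm) ∘ₗ Ksub.subtype) hmem2 with hσ
    have hkey2 : ∀ z : ↥(LinearMap.range (k'.hom : KB →ₗ[R] Lm)), k' (eK.symm z) = (z : Lm) := by
      intro z
      have h1 := congrArg Subtype.val (eK.apply_symm_apply z)
      rw [heK, LinearEquiv.ofInjective_apply] at h1
      exact h1
    have hk'σ : ∀ q : ↥Ksub, k' (σ q) = lam (Ksub.subtype q) := by
      intro q
      have h2 : σ q = eK.symm ⟨lam (Ksub.subtype q), hmem2 q⟩ := rfl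
      rw [h2]
      exact hkey2 ⟨lam (Ksub.subtype q), hmem2 q⟩
    set u : Kt ⟶ H := ModuleCat.ofHom (LinearMap.prod (-σ) Ksub.subtype) with hu
    have huap : ∀ q : ↥Ksub, u q = (-(σ q), (q : FL)) := fun q => rfl
    have hui : Function.Injective u := by
      intro a b hab
      have h1 : Ksub.subtype a = Ksub.subtype b := congrArg Prod.snd hab
      exact Subtype.val_injective h1
    have hexu : Function.Exact u h' := by
      intro z
      constructor
      · intro hz
        have hz' : k' z.1 + lam z.2 = 0 := hz
        have h3 : lam z.2 = k' (-z.1) := by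
          rw [map_neg]
          exact eq_neg_of_add_eq_zero_right hz'
        have h4 : t (lam z.2) = 0 := by
          rw [h3]
          exact hexk't.apply_apply_eq_zero (-z.1)
        have hzK : z.2 ∈ Ksub := h4
        refine ⟨⟨z.2, hzK⟩, ?_⟩
        have h5 : σ ⟨z.2, hzK⟩ = -z.1 := by
          apply hk'i
          rw [hk'σ]
          exact h3
        rw [huap, h5, neg_neg]
      · rintro ⟨q, rfl⟩
        show k' (-(σ q)) + lam (Ksub.subtype q) = 0
        rw [map_neg, hk'σ q, neg_add_cancel]
    have hHdim : FDimLE F i H := by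
      cases i with
      | zero =>
        rcases fdim_zero.mp hKB with hKBF | hKBss
        · exact fdim_zero.mpr (Or.inl (hsum KB FL hKBF hFL))
        · exact absurd hKBss hssKB
      | succ n =>
        exact prodDim hsum n KB FL hKB (fdim_le (Nat.zero_le _) (fdim_zero.mpr (Or.inl hFL)))
    have hLdim' : FDimLE F (i + 1) Lm :=
      fdim_succ.mpr ⟨KL, FL, Or.inl hFL, ⟨m, lam, hmi, hlams, hmlam⟩, hKL⟩
    have hKtdim : FDimLE F i Kt := IH Kt H Lm u h' hui hh's hexu hHdim hLdim'
    exact fdim_succ.mpr ⟨Kt, FL, Or.inl hFL,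
      ⟨ModuleCat.ofHom Ksub.subtype, τ, Subtype.val_injective, hτs,
        fun y => ⟨fun h => ⟨⟨y, h⟩, rfl⟩, by rintro ⟨⟨x, hx⟩, rfl⟩; exact hx⟩⟩, hKtdim⟩
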